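/- In the Artin group B(B_n), define α_{ts}, τ_t, β_{ts} by: α_{ts} = (σ_{t-1}···σ_{s+1}) σ_s (σ_{t-1}···σ_{s+1})⁻¹, τ_t = α_{t1} τ_1 α_{t1}⁻¹ for t > 1, and β_{ts} = τ_s⁻¹ α_{ts} τ_s. Then for all t > s: α_{ts} τ_s = τ_s β_{ts} = β_{ts} τ_t = τ_t α_{ts}. -/

import Mathlib

/-- The conjugating word `σ_{t-1} σ_{t-2} ⋯ σ_{s+1}`. -/
def bandWord {G : Type*} [Group G] (σ : ℕ → G) (t s : ℕ) : G :=
  (((List.range' (s + 1) (t - 1 - s)).reverse).map σ).prod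

/-- `α_{ts} = (σ_{t-1}⋯σ_{s+1}) σ_s (σ_{t-1}⋯σ_{s+1})⁻¹`. -/
def alphaB {G : Type*} [Group G] (σ : ℕ → G) (t s : ℕ) : G :=
  bandWord σ t s * σ s * (bandWord σ t s)⁻¹

/-- `τ_t = α_{t1} τ_1 α_{t1}⁻¹` (with `τ_1` itself for `t = 1`). -/
def tauB {G : Type*} [Group G] (σ : ℕ → G) (τ₁ : G) (t : ℕ) : G :=
  if t = 1 then τ₁ else alphaB σ t 1 * τ₁ * (alphaB σ t 1)⁻¹

/-- `β_{ts} = τ_s⁻¹ α_{ts} τ_s`. -/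
def betaB {G : Type*} [Group G] (σ : ℕ → G) (τ₁ : G) (t s : ℕ) : G :=
  (tauB σ τ₁ s)⁻¹ * alphaB σ t s * tauB σ τ₁ s

section Aux

variable {G : Type*} [Group G] (σ : ℕ → G)

/-- If `g` commutes with every letter of a word, it commutes with its product. -/
lemma genComm (g : G) (l : List ℕ) (h : ∀ i ∈ l, Commute g (σ i)) :
    Commute g (l.map σ).prod := by
  induction l with
  | nil => simp
  | cons a l ih =>
    simp only [List.map_cons, List.prod_cons]
    exact (h a (List.mem_cons_self (a := a) (l := l))).mul_right
      (ih fun i hi => h i (List.mem_cons_of_mem a hi))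

lemma genCommBand (g : G) (t s : ℕ) (h : ∀ i, s + 1 ≤ i → i ≤ t - 1 → Commute g (σ i)) :
    Commute g (bandWord σ t s) := by
  apply genComm
  intro i hi
  rw [List.mem_reverse, List.mem_range'] at hi
  obtain ⟨k, hk, rfl⟩ := hi
  exact h _ (by omega) (by omega)

lemma bandWord_split (t s : ℕ) (h : s + 2 ≤ t) :
    bandWord σ t s = bandWord σ t (s + 1) * σ (s + 1) := by
  unfold bandWord
  have h1 : t - 1 - s = (t - 1 - (s + 1)) + 1 := by omega
  rw [h1, List.range'_succ]
  simp [mul_assoc]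

lemma bandWord_succ (t s : ℕ) (h : s + 1 ≤ t) :
    bandWord σ (t + 1) s = σ t * bandWord σ t s := by
  unfold bandWord
  have h1 : t + 1 - 1 - s = (t - 1 - s) + 1 := by omega
  rw [h1, List.range'_1_concat]
  have h2 : s + 1 + (t - 1 - s) = t := by omega
  simp [h2]

lemma band_decomp (t s : ℕ) (hs : 1 ≤ s) (hst : s < t) :
    bandWord σ t 0 = bandWord σ t s * σ s * bandWord σ s 0 := by
  unfold bandWord
  have e1 : List.range' (0 + 1) (t - 1 - 0) = List.range' 1 (s - 1) ++ List.range' s (t - s) := by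
    rw [show t - 1 - 0 = (s - 1) + (t - s) by omega, ← List.range'_append_1 (s := 1) (m := s - 1) (n := t - s),
      show 1 + (s - 1) = s by omega]
  have e2 : List.range' s (t - s) = s :: List.range' (s + 1) (t - 1 - s) := by
    rw [show t - s = (t - 1 - s) + 1 by omega, List.range'_succ]
  rw [e1, e2]
  simp [mul_assoc]

end Aux

section Main

variable {G : Type*} [Group G] {n : ℕ} {τ₁ : G} {σ : ℕ → G}

lemma tau_formula (htau : ∀ j, 1 < j → j < n → τ₁ * σ j = σ j * τ₁)
    (t : ℕ) (h1t : 1 ≤ t) (htn : t ≤ n) :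
    tauB σ τ₁ t = bandWord σ t 0 * τ₁ * (bandWord σ t 0)⁻¹ := by
  rcases eq_or_lt_of_le h1t with h | h
  · simp [tauB, ← h, bandWord]
  · have hc : Commute τ₁ (bandWord σ t 1) :=
      genCommBand σ τ₁ t 1 fun i hi1 hi2 => htau i (by omega) (by omega)
    have hsplit : bandWord σ t 0 = bandWord σ t 1 * σ 1 := by
      simpa using bandWord_split σ t 0 (by omega)
    rw [tauB, if_neg (by omega), alphaB, hsplit]
    have h2 : (bandWord σ t 1)⁻¹ * τ₁ = τ₁ * (bandWord σ t 1)⁻¹ := hc.inv_right.symm.eq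
    calc bandWord σ t 1 * σ 1 * (bandWord σ t 1)⁻¹ * τ₁ *
          (bandWord σ t 1 * σ 1 * (bandWord σ t 1)⁻¹)⁻¹
        = bandWord σ t 1 * σ 1 * ((bandWord σ t 1)⁻¹ * τ₁) *
          (bandWord σ t 1 * (σ 1)⁻¹ * (bandWord σ t 1)⁻¹) := by group
      _ = bandWord σ t 1 * σ 1 * (τ₁ * (bandWord σ t 1)⁻¹) *
          (bandWord σ t 1 * (σ 1)⁻¹ * (bandWord σ t 1)⁻¹) := by rw [h2]
      _ = bandWord σ t 1 * σ 1 * τ₁ * (bandWord σ t 1 * σ 1)⁻¹ := by group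

lemma sigma_comm_tau (hcomm : ∀ i j, 1 < i + 1 → i + 1 < j → j < n → σ i * σ j = σ j * σ i)
    (htau : ∀ j, 1 < j → j < n → τ₁ * σ j = σ j * τ₁)
    (s j : ℕ) (hs : 1 ≤ s) (hsj : s < j) (hjn : j < n) :
    Commute (σ j) (tauB σ τ₁ s) := by
  rw [tau_formula htau s hs (by omega)]
  have hc : Commute (σ j) (bandWord σ s 0) :=
    genCommBand σ _ s 0 fun i hi1 hi2 => (hcomm i j (by omega) (by omega) hjn).symm
  have ht : Commute (σ j) τ₁ := (htau j (by omega) hjn).symm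
  exact (hc.mul_right ht).mul_right hc.inv_right

lemma braidB_rel (h1 : σ 1 * τ₁ * σ 1 * τ₁ = τ₁ * σ 1 * τ₁ * σ 1)
    (hbraid : ∀ i, 1 ≤ i → i ≤ n - 2 → σ i * σ (i + 1) * σ i = σ (i + 1) * σ i * σ (i + 1))
    (hcomm : ∀ i j, 1 < i + 1 → i + 1 < j → j < n → σ i * σ j = σ j * σ i)
    (htau : ∀ j, 1 < j → j < n → τ₁ * σ j = σ j * τ₁)
    (s : ℕ) (hs : 1 ≤ s) :
    s + 1 ≤ n →
    σ s * tauB σ τ₁ s * σ s * tauB σ τ₁ s = tauB σ τ₁ s * σ s * tauB σ τ₁ s * σ s := by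
  induction s, hs using Nat.le_induction with
  | base => intro _; simpa [tauB] using h1
  | succ s hs1 ih =>
    intro hsn
    have ih' := ih (by omega)
    set a := σ s with ha
    set b := σ (s + 1) with hbdef
    set T := tauB σ τ₁ s with hT
    have hb : a * b * a = b * a * b := hbraid s hs1 (by omega)
    have hcT' : Commute b T := sigma_comm_tau hcomm htau s (s + 1) hs1 (by omega) (by omega)
    have hcT : b * T = T * b := hcT'.eq
    have hcTinv : b⁻¹ * T = T * b⁻¹ := hcT'.inv_left.eq
    have hTs : tauB σ τ₁ (s + 1) = a * T * a⁻¹ := by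
      rw [tau_formula htau (s + 1) (by omega) (by omega), hT,
        tau_formula htau s hs1 (by omega), bandWord_succ σ s 0 (by omega), ha]
      group
    rw [hTs]
    have hba : a⁻¹ * b * a = b * a * b⁻¹ := by
      have h' : a * (a⁻¹ * b * a) = a * (b * a * b⁻¹) := by
        rw [show a * (b * a * b⁻¹) = a * b * a * b⁻¹ by group, hb]; group
      exact mul_left_cancel h'
    have hab : b⁻¹ * a⁻¹ * b = a * b⁻¹ * a⁻¹ := by
      have h' : b * (b⁻¹ * a⁻¹ * b) * a = b * (a * b⁻¹ * a⁻¹) * a := by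
        calc b * (b⁻¹ * a⁻¹ * b) * a = a⁻¹ * b * a := by group
          _ = b * a * b⁻¹ := hba
          _ = b * (a * b⁻¹ * a⁻¹) * a := by group
      exact mul_left_cancel (mul_right_cancel h')
    calc b * (a * T * a⁻¹) * b * (a * T * a⁻¹)
        = b * a * T * (a⁻¹ * b * a) * T * a⁻¹ := by group
      _ = b * a * T * (b * a * b⁻¹) * T * a⁻¹ := by rw [hba]
      _ = b * a * (T * b) * a * (b⁻¹ * T) * a⁻¹ := by group
      _ = b * a * (b * T) * a * (T * b⁻¹) * a⁻¹ := by rw [← hcT, hcTinv]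
      _ = (b * a * b) * (T * a * T) * (b⁻¹ * a⁻¹) := by group
      _ = (a * b * a) * (T * a * T) * (b⁻¹ * a⁻¹) := by rw [hb]
      _ = a * b * (a * T * a * T) * (b⁻¹ * a⁻¹) := by group
      _ = a * b * (T * a * T * a) * (b⁻¹ * a⁻¹) := by rw [ih']
      _ = a * b * T * a * T * (a * b⁻¹ * a⁻¹) := by group
      _ = a * b * T * a * T * (b⁻¹ * a⁻¹ * b) := by rw [← hab]
      _ = a * (b * T) * a * (T * b⁻¹) * (a⁻¹ * b) := by group
      _ = a * (T * b) * a * (b⁻¹ * T) * (a⁻¹ * b) := by rw [hcT, ← hcTinv]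
      _ = a * T * (a⁻¹ * (a * b * a) * b⁻¹) * T * a⁻¹ * b := by group
      _ = a * T * (a⁻¹ * (b * a * b) * b⁻¹) * T * a⁻¹ * b := by rw [hb]
      _ = (a * T * a⁻¹) * b * (a * T * a⁻¹) * b := by group

end Main

/-- In the Artin group `B(B_n)` (realized in any group by elements `τ_1, σ_1, …, σ_{n-1}`
satisfying its defining relations), for all `t > s`:
`α_{ts} τ_s = τ_s β_{ts} = β_{ts} τ_t = τ_t α_{ts}`. -/
theorem typeB_dual_generator_relations {G : Type*} [Group G] (n : ℕ) (τ₁ : G) (σ : ℕ → G)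
    (h1 : σ 1 * τ₁ * σ 1 * τ₁ = τ₁ * σ 1 * τ₁ * σ 1)
    (hbraid : ∀ i, 1 ≤ i → i ≤ n - 2 → σ i * σ (i + 1) * σ i = σ (i + 1) * σ i * σ (i + 1))
    (hcomm : ∀ i j, 1 < i + 1 → i + 1 < j → j < n → σ i * σ j = σ j * σ i)
    (htau : ∀ j, 1 < j → j < n → τ₁ * σ j = σ j * τ₁)
    (t s : ℕ) (ht : t ≤ n) (hts : s < t) (hs : 1 ≤ s) :
    alphaB σ t s * tauB σ τ₁ s = tauB σ τ₁ s * betaB σ τ₁ t s ∧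
    tauB σ τ₁ s * betaB σ τ₁ t s = betaB σ τ₁ t s * tauB σ τ₁ t ∧
    betaB σ τ₁ t s * tauB σ τ₁ t = tauB σ τ₁ t * alphaB σ t s := by
  set T := tauB σ τ₁ s with hTdef
  set w := bandWord σ t s with hwdef
  have hwT : Commute T w :=
    genCommBand σ T t s fun i hi1 hi2 =>
      (sigma_comm_tau hcomm htau s i hs (by omega) (by omega)).symm
  have hw1 : w⁻¹ * T = T * w⁻¹ := hwT.inv_right.symm.eq
  have hT : T = bandWord σ s 0 * τ₁ * (bandWord σ s 0)⁻¹ :=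
    tau_formula htau s hs (by omega)
  have hTt : tauB σ τ₁ t = w * σ s * T * (σ s)⁻¹ * w⁻¹ := by
    rw [tau_formula htau t (by omega) ht, band_decomp σ t s hs hts, hT, ← hwdef]
    group
  have hA : alphaB σ t s * T = tauB σ τ₁ t * alphaB σ t s := by
    rw [hTt, alphaB, ← hwdef]
    calc w * σ s * w⁻¹ * T = w * σ s * (w⁻¹ * T) := by group
      _ = w * σ s * (T * w⁻¹) := by rw [hw1]
      _ = w * σ s * T * (σ s)⁻¹ * w⁻¹ * (w * σ s * w⁻¹) := by group
  have hbr := braidB_rel h1 hbraid hcomm htau s hs (by omega)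
  have hBr : alphaB σ t s * T * (alphaB σ t s * T) =
      T * alphaB σ t s * (T * alphaB σ t s) := by
    rw [alphaB, ← hwdef]
    calc w * σ s * w⁻¹ * T * (w * σ s * w⁻¹ * T)
        = w * σ s * (w⁻¹ * T) * w * σ s * (w⁻¹ * T) := by group
      _ = w * σ s * (T * w⁻¹) * w * σ s * (T * w⁻¹) := by rw [hw1]
      _ = w * (σ s * T * σ s * T) * w⁻¹ := by group
      _ = w * (T * σ s * T * σ s) * w⁻¹ := by rw [hbr]
      _ = w * (T * w⁻¹) * (w * σ s) * (T * w⁻¹) * (w * σ s * w⁻¹) := by group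
      _ = w * (w⁻¹ * T) * (w * σ s) * (w⁻¹ * T) * (w * σ s * w⁻¹) := by rw [hw1]
      _ = T * (w * σ s * w⁻¹) * (T * (w * σ s * w⁻¹)) := by group
  have hBr' : alphaB σ t s * T * alphaB σ t s * T = T * alphaB σ t s * T * alphaB σ t s := by
    calc alphaB σ t s * T * alphaB σ t s * T
        = alphaB σ t s * T * (alphaB σ t s * T) := by group
      _ = T * alphaB σ t s * (T * alphaB σ t s) := hBr
      _ = T * alphaB σ t s * T * alphaB σ t s := by group
  have hTt' : tauB σ τ₁ t = alphaB σ t s * T * (alphaB σ t s)⁻¹ := by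
    rw [eq_mul_inv_iff_mul_eq, hA]
  refine ⟨by rw [betaB, ← hTdef]; group, ?_, ?_⟩
  · rw [betaB, ← hTdef, hTt']
    calc T * (T⁻¹ * alphaB σ t s * T) = alphaB σ t s * T := by group
      _ = T⁻¹ * (T * alphaB σ t s * T * alphaB σ t s) * (alphaB σ t s)⁻¹ := by group
      _ = T⁻¹ * (alphaB σ t s * T * alphaB σ t s * T) * (alphaB σ t s)⁻¹ := by rw [hBr']
      _ = T⁻¹ * alphaB σ t s * T * (alphaB σ t s * T * (alphaB σ t s)⁻¹) := by group
  · rw [betaB, ← hTdef, hTt']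
    calc T⁻¹ * alphaB σ t s * T * (alphaB σ t s * T * (alphaB σ t s)⁻¹)
        = T⁻¹ * (alphaB σ t s * T * alphaB σ t s * T) * (alphaB σ t s)⁻¹ := by group
      _ = T⁻¹ * (T * alphaB σ t s * T * alphaB σ t s) * (alphaB σ t s)⁻¹ := by rw [hBr']
      _ = alphaB σ t s * T := by group
      _ = alphaB σ t s * T * (alphaB σ t s)⁻¹ * alphaB σ t s := by group
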